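/- Let n ≥ 3 and let π ∈ S_n. Then π avoids both the pattern 231 and the pattern 1432, π² avoids the pattern 231, π(n−1) = n and π(n) = n−1, if and only if π = σ ⊕ 21 for some σ ∈ S_{n−2} such that σ avoids both 231 and 1432 and σ² avoids 231. -/

import Mathlib

/-- `π` contains the (classical) pattern `σ`: there is a strictly increasing
sequence of positions on which `π` is order isomorphic to `σ`. -/
def ContainsPat {n k : ℕ} (π : Equiv.Perm (Fin n)) (σ : Equiv.Perm (Fin k)) : Prop :=
  ∃ f : Fin k → Fin n, StrictMono f ∧ ∀ a b : Fin k, σ a < σ b ↔ π (f a) < π (f b)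

/-- `π` avoids the pattern `σ`. -/
def AvoidsPat {n k : ℕ} (π : Equiv.Perm (Fin n)) (σ : Equiv.Perm (Fin k)) : Prop :=
  ¬ ContainsPat π σ

/-- `π` contains the consecutive pattern `σ`: some `k` consecutive positions of `π`
carry values order isomorphic to `σ`. -/
def ContainsConsecPat {n k : ℕ} (π : Equiv.Perm (Fin n)) (σ : Equiv.Perm (Fin k)) : Prop :=
  ∃ (i : ℕ) (h : i + k ≤ n), ∀ a b : Fin k,
    σ a < σ b ↔ π ⟨i + a.val, by have := a.isLt; omega⟩ < π ⟨i + b.val, by have := b.isLt; omega⟩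

/-- `π` avoids the consecutive pattern `σ`. -/
def AvoidsConsecPat {n k : ℕ} (π : Equiv.Perm (Fin n)) (σ : Equiv.Perm (Fin k)) : Prop :=
  ¬ ContainsConsecPat π σ

/-- the pattern 231 (0-indexed: 0 ↦ 1, 1 ↦ 2, 2 ↦ 0) -/
def p231 : Equiv.Perm (Fin 3) := c[0, 1, 2]

/-- the pattern 312 (0-indexed: 0 ↦ 2, 1 ↦ 0, 2 ↦ 1) -/
def p312 : Equiv.Perm (Fin 3) := c[0, 2, 1]

/-- the pattern 213 (0-indexed: 0 ↦ 1, 1 ↦ 0, 2 ↦ 2) -/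
def p213 : Equiv.Perm (Fin 3) := c[0, 1]

/-- the pattern 1432 (0-indexed: 0 ↦ 0, 1 ↦ 3, 2 ↦ 2, 3 ↦ 1) -/
def p1432 : Equiv.Perm (Fin 4) := c[1, 3]

/-- direct sum of two permutations -/
def dsum {k m : ℕ} (σ : Equiv.Perm (Fin k)) (τ : Equiv.Perm (Fin m)) :
    Equiv.Perm (Fin (k + m)) :=
  finSumFinEquiv.symm.trans ((Equiv.sumCongr σ τ).trans finSumFinEquiv)

/-- the Lucas numbers: L₁ = 1, L₂ = 3, L_m = L_{m-1} + L_{m-2} -/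
def lucas : ℕ → ℕ
  | 0 => 2
  | 1 => 1
  | n + 2 => lucas (n + 1) + lucas n

lemma dsum_left {k m : ℕ} (σ : Equiv.Perm (Fin k)) (τ : Equiv.Perm (Fin m)) (i : Fin k) :
    dsum σ τ (Fin.castAdd m i) = Fin.castAdd m (σ i) := by
  simp [dsum]

lemma dsum_right {k m : ℕ} (σ : Equiv.Perm (Fin k)) (τ : Equiv.Perm (Fin m)) (j : Fin m) :
    dsum σ τ (Fin.natAdd k j) = Fin.natAdd k (τ j) := by
  simp [dsum]

lemma dsum_val {k m : ℕ} (σ : Equiv.Perm (Fin k)) (τ : Equiv.Perm (Fin m)) (x : Fin (k + m)) :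
    ((dsum σ τ x : Fin (k+m)) : ℕ) =
      if h : (x : ℕ) < k then (σ ⟨x, h⟩ : ℕ)
      else k + (τ ⟨(x:ℕ) - k, by omega⟩ : ℕ) := by
  split_ifs with h
  · have : x = Fin.castAdd m ⟨x, h⟩ := by ext; rfl
    conv_lhs => rw [this, dsum_left]
    rfl
  · have : x = Fin.natAdd k ⟨(x:ℕ) - k, by omega⟩ := by ext; simp; omega
    conv_lhs => rw [this, dsum_right]
    rfl

lemma dsum_lt_iff {k m : ℕ} (σ : Equiv.Perm (Fin k)) (τ : Equiv.Perm (Fin m)) (x : Fin (k + m)) :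
    ((dsum σ τ x : Fin (k+m)) : ℕ) < k ↔ (x : ℕ) < k := by
  rw [dsum_val]; split_ifs with h
  · exact iff_of_true (σ ⟨x, h⟩).isLt h
  · exact iff_of_false (by omega) h

lemma contains_dsum_of {n k j : ℕ} {σ : Equiv.Perm (Fin n)} (τ : Equiv.Perm (Fin k))
    {p : Equiv.Perm (Fin j)} (h : ContainsPat σ p) : ContainsPat (dsum σ τ) p := by
  obtain ⟨f, hf, hc⟩ := h
  refine ⟨fun a => Fin.castAdd k (f a), fun a b hab => ?_, fun a b => ?_⟩
  · have := hf hab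
    rw [Fin.lt_def] at this ⊢
    simpa using this
  · rw [hc a b, dsum_left, dsum_left, Fin.lt_def, Fin.lt_def]
    simp

lemma contains231_dsum {n : ℕ} {σ : Equiv.Perm (Fin n)} {τ : Equiv.Perm (Fin 2)}
    (h : ContainsPat (dsum σ τ) p231) : ContainsPat σ p231 := by
  obtain ⟨f, hf, hc⟩ := h
  have h01 : ((dsum σ τ) (f 0) : ℕ) < ((dsum σ τ) (f 1) : ℕ) := (hc 0 1).mp (by decide)
  have h20 : ((dsum σ τ) (f 2) : ℕ) < ((dsum σ τ) (f 0) : ℕ) := (hc 2 0).mp (by decide)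
  have hlast : ((f 2 : Fin (n+2)) : ℕ) < n := by
    by_contra hge
    have e2 : ¬ ((dsum σ τ) (f 2) : ℕ) < n := by rw [dsum_lt_iff]; exact hge
    have e0 : ¬ ((f 0 : Fin (n+2)) : ℕ) < n := by
      rw [← dsum_lt_iff σ τ]; omega
    have e1 : ¬ ((f 1 : Fin (n+2)) : ℕ) < n := by
      rw [← dsum_lt_iff σ τ]; omega
    have m01 : ((f 0 : Fin (n+2)) : ℕ) < ((f 1 : Fin (n+2)) : ℕ) := hf (by decide)
    have m12 : ((f 1 : Fin (n+2)) : ℕ) < ((f 2 : Fin (n+2)) : ℕ) := hf (by decide)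
    have := (f 2).isLt
    omega
  have hlt : ∀ a : Fin 3, ((f a : Fin (n+2)) : ℕ) < n := by
    intro a
    have : f a ≤ f 2 := hf.monotone (Fin.le_last a)
    have := Fin.le_def.mp this
    omega
  refine ⟨fun a => ⟨f a, hlt a⟩, fun a b hab => ?_, fun a b => ?_⟩
  case _ =>
    have := hf hab
    rw [Fin.lt_def] at this ⊢
    exact this
  have hv : ∀ a : Fin 3, ((dsum σ τ) (f a) : ℕ) = (σ ⟨f a, hlt a⟩ : ℕ) := by
    intro a; rw [dsum_val, dif_pos (hlt a)]
  rw [hc a b, Fin.lt_def, Fin.lt_def, hv a, hv b]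

lemma contains1432_dsum {n : ℕ} {σ : Equiv.Perm (Fin n)} {τ : Equiv.Perm (Fin 2)}
    (h : ContainsPat (dsum σ τ) p1432) : ContainsPat σ p1432 := by
  obtain ⟨f, hf, hc⟩ := h
  have h32 : ((dsum σ τ) (f 3) : ℕ) < ((dsum σ τ) (f 2) : ℕ) := (hc 3 2).mp (by decide)
  have h21 : ((dsum σ τ) (f 2) : ℕ) < ((dsum σ τ) (f 1) : ℕ) := (hc 2 1).mp (by decide)
  have hlast : ((f 3 : Fin (n+2)) : ℕ) < n := by
    by_contra hge
    have e3 : ¬ ((dsum σ τ) (f 3) : ℕ) < n := by rw [dsum_lt_iff]; exact hge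
    have e2 : ¬ ((f 2 : Fin (n+2)) : ℕ) < n := by rw [← dsum_lt_iff σ τ]; omega
    have e1 : ¬ ((f 1 : Fin (n+2)) : ℕ) < n := by rw [← dsum_lt_iff σ τ]; omega
    have m12 : ((f 1 : Fin (n+2)) : ℕ) < ((f 2 : Fin (n+2)) : ℕ) := hf (by decide)
    have m23 : ((f 2 : Fin (n+2)) : ℕ) < ((f 3 : Fin (n+2)) : ℕ) := hf (by decide)
    have := (f 3).isLt
    omega
  have hlt : ∀ a : Fin 4, ((f a : Fin (n+2)) : ℕ) < n := by
    intro a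
    have : f a ≤ f 3 := hf.monotone (Fin.le_last a)
    have := Fin.le_def.mp this
    omega
  refine ⟨fun a => ⟨f a, hlt a⟩, fun a b hab => ?_, fun a b => ?_⟩
  case _ =>
    have := hf hab
    rw [Fin.lt_def] at this ⊢
    exact this
  have hv : ∀ a : Fin 4, ((dsum σ τ) (f a) : ℕ) = (σ ⟨f a, hlt a⟩ : ℕ) := by
    intro a; rw [dsum_val, dif_pos (hlt a)]
  rw [hc a b, Fin.lt_def, Fin.lt_def, hv a, hv b]

lemma contains_permCongr {a b j : ℕ} (h : a = b) (ρ : Equiv.Perm (Fin a))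
    (p : Equiv.Perm (Fin j)) :
    ContainsPat ((finCongr h).permCongr ρ) p ↔ ContainsPat ρ p := by
  subst h; simp [ContainsPat]

lemma permCongr_pow {a b : ℕ} (h : a = b) (ρ : Equiv.Perm (Fin a)) :
    ((finCongr h).permCongr ρ) ^ 2 = (finCongr h).permCongr (ρ ^ 2) := by
  subst h; simp

lemma dsum_mul {k m : ℕ} (σ σ' : Equiv.Perm (Fin k)) (τ τ' : Equiv.Perm (Fin m)) :
    dsum σ τ * dsum σ' τ' = dsum (σ * σ') (τ * τ') := by
  ext x
  obtain ⟨s, rfl⟩ := finSumFinEquiv.surjective x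
  cases s with
  | inl i => simp [Equiv.Perm.mul_apply, dsum_left]
  | inr j => simp [Equiv.Perm.mul_apply, dsum_right]

lemma permCongr_dsum_val {n : ℕ} (hn : 3 ≤ n) (σ : Equiv.Perm (Fin (n-2)))
    (h2 : (n-2)+2 = n) (x : Fin n) :
    (((finCongr h2).permCongr (dsum σ (Equiv.swap (0:Fin 2) 1))) x : ℕ)
      = if h : (x:ℕ) < n - 2 then (σ ⟨x, h⟩ : ℕ)
        else if (x:ℕ) = n - 2 then n - 1 else n - 2 := by
  have hxlt := x.isLt
  rw [Equiv.permCongr_apply, finCongr_apply, Fin.coe_cast, dsum_val]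
  have hx : (((finCongr h2).symm x : Fin ((n-2)+2)) : ℕ) = (x : ℕ) := by
    simp [finCongr_symm, finCongr_apply]
  by_cases ha : (x:ℕ) < n - 2
  · rw [dif_pos (by omega), dif_pos ha]
    have he : (⟨(((finCongr h2).symm x : Fin ((n-2)+2)) : ℕ), by omega⟩ : Fin (n-2))
        = ⟨(x:ℕ), ha⟩ := Fin.ext hx
    rw [he]
  · rw [dif_neg (by omega), dif_neg ha]
    by_cases hb : (x:ℕ) = n - 2
    · rw [if_pos hb]
      have hi : (⟨(((finCongr h2).symm x : Fin ((n-2)+2)) : ℕ) - (n-2), by omega⟩ : Fin 2)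
          = 0 := Fin.ext (by simp [hx, hb])
      rw [hi, Equiv.swap_apply_left]
      have h1 : ((1 : Fin 2) : ℕ) = 1 := rfl
      omega
    · rw [if_neg hb]
      have hi : (⟨(((finCongr h2).symm x : Fin ((n-2)+2)) : ℕ) - (n-2), by omega⟩ : Fin 2)
          = 1 := Fin.ext (by simp [hx]; omega)
      rw [hi, Equiv.swap_apply_right]
      have h0 : ((0 : Fin 2) : ℕ) = 0 := rfl
      omega

/-- for n ≥ 3, π ∈ S_n avoids 231 and 1432, π² avoids 231, π(n−1) = n and
π(n) = n−1, iff π = σ ⊕ 21 for some σ ∈ S_{n−2} avoiding 231 and 1432 with σ² avoiding 231. -/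
theorem stmt6 (n : ℕ) (hn : 3 ≤ n) (π : Equiv.Perm (Fin n)) :
    (AvoidsPat π p231 ∧ AvoidsPat π p1432 ∧ AvoidsPat (π ^ 2) p231 ∧
        π ⟨n - 2, by omega⟩ = ⟨n - 1, by omega⟩ ∧ π ⟨n - 1, by omega⟩ = ⟨n - 2, by omega⟩) ↔
      ∃ σ : Equiv.Perm (Fin (n - 2)),
        AvoidsPat σ p231 ∧ AvoidsPat σ p1432 ∧ AvoidsPat (σ ^ 2) p231 ∧
        π = (finCongr (by omega : (n - 2) + 2 = n)).permCongr
              (dsum σ (Equiv.swap (0 : Fin 2) 1)) := by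
  have h2 : (n - 2) + 2 = n := by omega
  constructor
  · rintro ⟨h231, h1432, hsq, hA, hB⟩
    have key : ∀ i : Fin n, (i : ℕ) < n - 2 → ((π i : Fin n) : ℕ) < n - 2 := by
      intro i hi
      by_contra hge
      push_neg at hge
      have hlt := (π i).isLt
      rcases (by omega : ((π i : Fin n) : ℕ) = n - 1 ∨ ((π i : Fin n) : ℕ) = n - 2) with h | h
      · have e : π i = π ⟨n-2, by omega⟩ := by rw [hA]; exact Fin.ext h
        have := congrArg Fin.val (π.injective e)
        simp at this; omega
      · have e : π i = π ⟨n-1, by omega⟩ := by rw [hB]; exact Fin.ext h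
        have := congrArg Fin.val (π.injective e)
        simp at this; omega
    have key' : ∀ i : Fin n, (i : ℕ) < n - 2 → ((π⁻¹ i : Fin n) : ℕ) < n - 2 := by
      intro i hi
      by_contra hge
      push_neg at hge
      have hlt := (π⁻¹ i).isLt
      rcases (by omega : ((π⁻¹ i : Fin n) : ℕ) = n - 2 ∨ ((π⁻¹ i : Fin n) : ℕ) = n - 1) with h | h
      · have e : i = π ⟨n-2, by omega⟩ := by
          conv_lhs => rw [← π.apply_symm_apply i]
          exact congrArg π (Fin.ext h)
        rw [hA] at e
        have := congrArg Fin.val e; simp at this; omega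
      · have e : i = π ⟨n-1, by omega⟩ := by
          conv_lhs => rw [← π.apply_symm_apply i]
          exact congrArg π (Fin.ext h)
        rw [hB] at e
        have := congrArg Fin.val e; simp at this; omega
    set σ : Equiv.Perm (Fin (n-2)) :=
      { toFun := fun i => ⟨π ⟨i, by have := i.isLt; omega⟩, key _ i.isLt⟩
        invFun := fun i => ⟨π⁻¹ ⟨i, by have := i.isLt; omega⟩, key' _ i.isLt⟩
        left_inv := fun i => by
          apply Fin.ext
          simp
        right_inv := fun i => by
          apply Fin.ext
          simp } with hσdef
    have hσval : ∀ i : Fin (n-2), (σ i : ℕ) = ((π ⟨i, by have := i.isLt; omega⟩ : Fin n) : ℕ) :=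
      fun i => rfl
    have heq : π = (finCongr h2).permCongr (dsum σ (Equiv.swap (0:Fin 2) 1)) := by
      apply Equiv.ext
      intro x
      apply Fin.ext
      rw [permCongr_dsum_val hn σ h2 x]
      have hxlt := x.isLt
      split_ifs with ha hb
      · rw [hσval]
      · have hex : x = (⟨n-2, by omega⟩ : Fin n) := Fin.ext hb
        rw [hex, hA]
      · have hx3 : (x:ℕ) = n - 1 := by omega
        have hex : x = (⟨n-1, by omega⟩ : Fin n) := Fin.ext hx3
        rw [hex, hB]
    refine ⟨σ, ?_, ?_, ?_, heq⟩
    · intro hc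
      exact h231 (by rw [heq]; exact (contains_permCongr _ _ _).mpr (contains_dsum_of _ hc))
    · intro hc
      exact h1432 (by rw [heq]; exact (contains_permCongr _ _ _).mpr (contains_dsum_of _ hc))
    · intro hc
      apply hsq
      rw [heq, permCongr_pow, pow_two, dsum_mul]
      exact (contains_permCongr _ _ _).mpr (contains_dsum_of _ (by rwa [pow_two] at hc))
  · rintro ⟨σ, hσ1, hσ2, hσ3, rfl⟩
    refine ⟨?_, ?_, ?_, ?_, ?_⟩
    · intro hc
      exact hσ1 (contains231_dsum ((contains_permCongr _ _ _).mp hc))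
    · intro hc
      exact hσ2 (contains1432_dsum ((contains_permCongr _ _ _).mp hc))
    · intro hc
      rw [permCongr_pow, pow_two, dsum_mul] at hc
      exact hσ3 (by rw [pow_two]; exact contains231_dsum ((contains_permCongr _ _ _).mp hc))
    · apply Fin.ext
      rw [permCongr_dsum_val hn σ h2]
      have hv : ((⟨n - 2, by omega⟩ : Fin n) : ℕ) = n - 2 := rfl
      rw [dif_neg (by omega), if_pos (by omega)]
    · apply Fin.ext
      rw [permCongr_dsum_val hn σ h2]
      have hv : ((⟨n - 1, by omega⟩ : Fin n) : ℕ) = n - 1 := rfl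
      rw [dif_neg (by omega), if_neg (by omega)]
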